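/- Let n ≥ 1, let F = 𝔽_{2^n}, and let x, y ∈ F with y ≠ x³. Then the number of unordered triples {a, b, c} of pairwise distinct elements of F satisfying a + b + c = x and a³ + b³ + c³ = y is at least (2^n − 2·√(2^n) − 2)/6. -/

import Mathlib

open Finset
open scoped Classical

section Aux
variable {n : ℕ}
local notation "F" => GaloisField 2 n

noncomputable local instance : Fintype (GaloisField 2 n) := Fintype.ofFinite _

noncomputable def tr (z : F) : ZMod 2 := Algebra.trace (ZMod 2) (GaloisField 2 n) z

lemma tr_add (a b : F) : tr (a + b) = tr a + tr b := map_add _ a b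

noncomputable def frobAlg : F ≃ₐ[ZMod 2] F :=
  AlgEquiv.ofRingEquiv (f := frobeniusEquiv (GaloisField 2 n) 2) (by
    intro r
    show frobenius (GaloisField 2 n) 2 _ = _
    rw [frobenius_def, ← map_pow]
    congr 1
    revert r; decide)

lemma tr_sq (z : F) : tr (z ^ 2) = tr z := by
  have h := RingHom.injective (algebraMap (ZMod 2) (GaloisField 2 n))
  apply h
  show algebraMap (ZMod 2) (GaloisField 2 n) (Algebra.trace _ _ _) = algebraMap _ _ (Algebra.trace _ _ _)
  rw [trace_eq_sum_automorphisms, trace_eq_sum_automorphisms]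
  have : ∀ σ : F ≃ₐ[ZMod 2] F, σ (z ^ 2) = (σ * frobAlg (n := n)) z := by
    intro σ; rfl
  rw [Fintype.sum_congr _ _ this]
  exact Fintype.sum_bijective (· * frobAlg (n := n)) (Group.mulRight_bijective _) _ _ (fun σ => rfl)

lemma tr_nondeg {d : F} (hd : d ≠ 0) : ∃ b, tr (d * b) ≠ 0 := by
  have h : Algebra.trace (ZMod 2) (GaloisField 2 n) ≠ 0 := Algebra.trace_ne_zero _ _
  have : ∃ z : F, tr z ≠ 0 := by
    by_contra hc
    push_neg at hc
    exact h (LinearMap.ext fun z => hc z)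
  obtain ⟨z, hz⟩ := this
  exact ⟨d⁻¹ * z, by rwa [← mul_assoc, mul_inv_cancel₀ hd, one_mul]⟩

def e (s : ZMod 2) : ℤ := if s = 0 then 1 else -1

lemma e_add (s t : ZMod 2) : e (s + t) = e s * e t := by revert s t; decide
lemma e_le_one (s : ZMod 2) : e s ≤ 1 := by revert s; decide
lemma e_one_add (s : ZMod 2) : e (1 + s) = - e s := by revert s; decide

lemma sum_e_eq_zero (φ : F → ZMod 2) (hadd : ∀ a b, φ (a + b) = φ a + φ b)
    (v₀ : F) (hv₀ : φ v₀ ≠ 0) : ∑ v : F, e (φ v) = 0 := by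
  have h1 : φ v₀ = 1 := by
    have : ∀ a : ZMod 2, a ≠ 0 → a = 1 := by decide
    exact this _ hv₀
  have key : ∑ v : F, e (φ v) = ∑ v : F, e (φ (v + v₀)) :=
    (Fintype.sum_bijective (· + v₀) (Equiv.addRight v₀).bijective _ _ (fun v => rfl)).symm
  have h2 : ∀ v : F, e (φ (v + v₀)) = - e (φ v) := by
    intro v; rw [hadd, h1, add_comm, e_one_add]
  rw [Finset.sum_congr rfl (fun v _ => h2 v), Finset.sum_neg_distrib] at key
  linarith

lemma sum_e_card (f : F → ZMod 2) :
    ∑ v : F, e (f v) = 2 * ((univ.filter fun v => f v = 0).card : ℤ) - Fintype.card F := by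
  classical
  rw [← Finset.sum_filter_add_sum_filter_not univ (fun v => f v = 0)]
  have h1 : ∑ v ∈ univ.filter (fun v => f v = 0), e (f v) =
      ((univ.filter fun v => f v = 0).card : ℤ) := by
    rw [Finset.sum_congr rfl (fun v hv => show e (f v) = 1 by
      simp [e, (Finset.mem_filter.mp hv).2]), Finset.sum_const]; simp
  have h2 : ∑ v ∈ univ.filter (fun v => ¬ f v = 0), e (f v) =
      -((univ.filter fun v => ¬ f v = 0).card : ℤ) := by
    rw [Finset.sum_congr rfl (fun v hv => show e (f v) = -1 by
      simp [e, (Finset.mem_filter.mp hv).2]), Finset.sum_const]; simp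
  rw [h1, h2]
  have := Finset.card_filter_add_card_filter_not (s := (univ : Finset (GaloisField 2 n)))
    (p := fun v => f v = 0)
  rw [Finset.card_univ] at this
  push_cast [← this]
  ring

lemma card_ker (d : F) (hd : d ≠ 0) :
    2 * ((univ.filter fun v : F => tr (d * v) = 0).card : ℤ) = Fintype.card F := by
  obtain ⟨b, hb⟩ := tr_nondeg hd
  have h0 : ∑ v : F, e (tr (d * v)) = 0 := sum_e_eq_zero (fun v => tr (d * v))
    (fun a b => show tr (d * (a + b)) = _ by rw [mul_add, tr_add]) b hb
  have h1 : ∑ v : F, e (tr (d * v)) =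
      2 * ((univ.filter fun v : F => tr (d * v) = 0).card : ℤ) - Fintype.card F :=
    sum_e_card (fun v : F => tr (d * v))
  omega

lemma cubic_roots_card (d : F) : (univ.filter fun h : F => h ^ 3 = d).card ≤ 3 := by
  classical
  have hsub : (univ.filter fun h : F => h ^ 3 = d) ⊆
      (Polynomial.X ^ 3 - Polynomial.C d : Polynomial (GaloisField 2 n)).roots.toFinset := by
    intro h hm
    rw [Finset.mem_filter] at hm
    rw [Multiset.mem_toFinset, Polynomial.mem_roots
      (Polynomial.X_pow_sub_C_ne_zero (by norm_num) d)]
    simp [Polynomial.IsRoot, hm.2]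
  calc (univ.filter fun h : F => h ^ 3 = d).card
      ≤ _ := Finset.card_le_card hsub
    _ ≤ Multiset.card (Polynomial.X ^ 3 - Polynomial.C d :
        Polynomial (GaloisField 2 n)).roots := Multiset.toFinset_card_le _
    _ ≤ _ := (Polynomial.card_roots' _)
    _ ≤ 3 := by rw [Polynomial.natDegree_X_pow_sub_C]

lemma phi_zero_iff {c h : F} (hc : c ≠ 0) (hh : h ≠ 0)
    (hz : ∀ v : F, tr (c * h * v ^ 2 + c * h ^ 2 * v) = 0) : c * h ^ 3 = 1 := by
  set s := (frobeniusEquiv (GaloisField 2 n) 2).symm (c * h) with hsdef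
  have hs2 : s ^ 2 = c * h := by
    have := frobenius_apply_frobeniusEquiv_symm (GaloisField 2 n) 2 (c * h)
    rwa [frobenius_def] at this
  have key : ∀ v : F, tr ((s + c * h ^ 2) * v) = 0 := by
    intro v
    calc tr ((s + c * h ^ 2) * v) = tr (s * v) + tr (c * h ^ 2 * v) := by
          rw [← tr_add]; congr 1; ring
      _ = tr (c * h * v ^ 2) + tr (c * h ^ 2 * v) := by
          rw [show c * h * v ^ 2 = (s * v) ^ 2 by rw [mul_pow, hs2], tr_sq]
      _ = tr (c * h * v ^ 2 + c * h ^ 2 * v) := (tr_add _ _).symm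
      _ = 0 := hz v
  have hs0 : s + c * h ^ 2 = 0 := by
    by_contra hne
    obtain ⟨b, hb⟩ := tr_nondeg hne
    exact hb (key b)
  have hs3 : s = c * h ^ 2 := by
    have h2 : (2 : GaloisField 2 n) = 0 := CharTwo.two_eq_zero
    linear_combination hs0 - (c * h ^ 2) * h2
  have hch : c * h = (c * h ^ 2) ^ 2 := by rw [← hs3, hs2]
  have hch0 : c * h ≠ 0 := mul_ne_zero hc hh
  apply mul_left_cancel₀ hch0
  rw [mul_one]
  calc c * h * (c * h ^ 3) = (c * h ^ 2) ^ 2 := by ring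
    _ = c * h := hch.symm

lemma sum_e_sq_le (c : F) (hc : c ≠ 0) :
    (∑ v : F, e (tr (c * v ^ 3))) ^ 2 ≤ 4 * Fintype.card F := by
  classical
  have h2 : (2 : GaloisField 2 n) = 0 := CharTwo.two_eq_zero
  have hadd : ∀ h a b : F, tr (c * h * (a + b) ^ 2 + c * h ^ 2 * (a + b))
      = tr (c * h * a ^ 2 + c * h ^ 2 * a) + tr (c * h * b ^ 2 + c * h ^ 2 * b) := by
    intro h a b
    rw [← tr_add]; congr 1
    rw [CharTwo.add_sq]; ring
  have expand : (∑ v : F, e (tr (c * v ^ 3))) ^ 2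
      = ∑ h : F, (e (tr (c * h ^ 3)) * ∑ v : F, e (tr (c * h * v ^ 2 + c * h ^ 2 * v))) := by
    rw [sq, Finset.sum_mul_sum]
    have step1 : ∀ v : F, (∑ w : F, e (tr (c * v ^ 3)) * e (tr (c * w ^ 3)))
        = ∑ h : F, e (tr (c * h ^ 3)) * e (tr (c * h * v ^ 2 + c * h ^ 2 * v)) := by
      intro v
      rw [← Fintype.sum_bijective (v + ·) (Equiv.addLeft v).bijective _ _ (fun h => rfl)]
      apply Finset.sum_congr rfl
      intro h _
      rw [← e_add, ← e_add, ← tr_add, ← tr_add]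
      congr 2
      linear_combination (c * v ^ 3 + c * v ^ 2 * h + c * v * h ^ 2) * h2
    rw [Finset.sum_congr rfl (fun v _ => step1 v), Finset.sum_comm]
    apply Finset.sum_congr rfl
    intro h _
    rw [Finset.mul_sum]
  rw [expand]
  have hbound : ∀ h : F, (e (tr (c * h ^ 3)) * ∑ v : F, e (tr (c * h * v ^ 2 + c * h ^ 2 * v)))
      ≤ if h = 0 ∨ c * h ^ 3 = 1 then (Fintype.card F : ℤ) else 0 := by
    intro h
    by_cases hcase : ∀ v : F, tr (c * h * v ^ 2 + c * h ^ 2 * v) = 0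
    · have hs : ∑ v : F, e (tr (c * h * v ^ 2 + c * h ^ 2 * v)) = Fintype.card F := by
        rw [Finset.sum_congr rfl (fun v _ => show e _ = 1 by rw [hcase v]; rfl)]
        simp
      have hor : h = 0 ∨ c * h ^ 3 = 1 := by
        by_cases h0 : h = 0
        · exact Or.inl h0
        · exact Or.inr (phi_zero_iff hc h0 hcase)
      rw [if_pos hor, hs]
      have h1 := e_le_one (tr (c * h ^ 3))
      have hq : (0 : ℤ) ≤ Fintype.card F := Int.natCast_nonneg _
      nlinarith
    · push_neg at hcase
      obtain ⟨v₀, hv₀⟩ := hcase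
      have hs : ∑ v : F, e (tr (c * h * v ^ 2 + c * h ^ 2 * v)) = 0 :=
        sum_e_eq_zero _ (hadd h) v₀ hv₀
      rw [hs, mul_zero]
      split_ifs
      · exact Int.natCast_nonneg _
      · exact le_refl 0
  calc ∑ h : F, (e (tr (c * h ^ 3)) * ∑ v : F, e (tr (c * h * v ^ 2 + c * h ^ 2 * v)))
      ≤ ∑ h : F, if h = 0 ∨ c * h ^ 3 = 1 then (Fintype.card F : ℤ) else 0 :=
        Finset.sum_le_sum (fun h _ => hbound h)
    _ = (univ.filter fun h : F => h = 0 ∨ c * h ^ 3 = 1).card * (Fintype.card F : ℤ) := by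
        rw [Finset.sum_ite, Finset.sum_const, Finset.sum_const]
        simp [mul_comm]
    _ ≤ 4 * Fintype.card F := by
        have hcard : (univ.filter fun h : F => h = 0 ∨ c * h ^ 3 = 1).card ≤ 4 := by
          have hsub : (univ.filter fun h : F => h = 0 ∨ c * h ^ 3 = 1) ⊆
              insert 0 (univ.filter fun h : F => h ^ 3 = c⁻¹) := by
            intro h hm
            rw [Finset.mem_filter] at hm
            rcases hm.2 with h0 | h1
            · rw [h0]; exact Finset.mem_insert_self _ _
            · apply Finset.mem_insert_of_mem
              rw [Finset.mem_filter]
              refine ⟨Finset.mem_univ _, ?_⟩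
              field_simp
              linear_combination h1
          calc (univ.filter fun h : F => h = 0 ∨ c * h ^ 3 = 1).card
              ≤ _ := Finset.card_le_card hsub
            _ ≤ (univ.filter fun h : F => h ^ 3 = c⁻¹).card + 1 := Finset.card_insert_le _ _
            _ ≤ 4 := by
                have := cubic_roots_card (n := n) c⁻¹
                omega
        have hq : (0 : ℤ) ≤ Fintype.card F := Int.natCast_nonneg _
        calc ((univ.filter fun h : F => h = 0 ∨ c * h ^ 3 = 1).card : ℤ) * (Fintype.card F : ℤ)
            ≤ 4 * Fintype.card F := by
              apply mul_le_mul_of_nonneg_right _ hq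
              exact_mod_cast hcard

lemma zmod2_add_self (s : ZMod 2) : s + s = 0 := by revert s; decide

lemma fiber_two {u r : F} (hu : u ≠ 0) (a₀ : F) (h : a₀ ^ 2 + u * a₀ = r) :
    (univ.filter fun a : F => a ^ 2 + u * a = r).card = 2 := by
  classical
  have h2 : (2 : GaloisField 2 n) = 0 := CharTwo.two_eq_zero
  have hset : (univ.filter fun a : F => a ^ 2 + u * a = r) = {a₀, a₀ + u} := by
    ext a
    simp only [Finset.mem_filter, Finset.mem_univ, true_and, Finset.mem_insert,
      Finset.mem_singleton]
    constructor
    · intro ha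
      have hfac : (a + a₀) * (a + a₀ + u) = 0 := by
        linear_combination ha + h + (a * a₀ + r) * h2
      rcases mul_eq_zero.mp hfac with hl | hl
      · left; linear_combination hl - a₀ * h2
      · right; linear_combination hl - (a₀ + u) * h2
    · rintro (rfl | rfl)
      · exact h
      · linear_combination h + (a₀ * u + u ^ 2) * h2
  rw [hset]
  rw [Finset.card_insert_of_notMem (by
    simp only [Finset.mem_singleton]
    intro hcon
    exact hu (by linear_combination - hcon)), Finset.card_singleton]

lemma fiber_card {u : F} (hu : u ≠ 0) (r : F) :
    (univ.filter fun a : F => a ^ 2 + u * a = r).card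
      = if tr ((u⁻¹) ^ 2 * r) = 0 then 2 else 0 := by
  classical
  set I := univ.image (fun a : F => a ^ 2 + u * a) with hI
  set K := univ.filter (fun t : F => tr ((u⁻¹) ^ 2 * t) = 0) with hK
  have hcardq : Fintype.card (GaloisField 2 n) = 2 * I.card := by
    have h1 : (univ : Finset (GaloisField 2 n)).card
        = ∑ r ∈ I, (univ.filter fun a : F => a ^ 2 + u * a = r).card :=
      Finset.card_eq_sum_card_fiberwise
        (fun a _ => Finset.mem_image_of_mem _ (Finset.mem_univ a))
    rw [Finset.card_univ] at h1
    rw [h1, Finset.sum_congr rfl (fun r hr => by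
      obtain ⟨a₀, _, ha₀⟩ := Finset.mem_image.mp hr
      exact fiber_two hu a₀ ha₀), Finset.sum_const, smul_eq_mul, mul_comm]
  have hsub : I ⊆ K := by
    intro r hr
    obtain ⟨a₀, _, ha₀⟩ := Finset.mem_image.mp hr
    rw [hK, Finset.mem_filter]
    refine ⟨Finset.mem_univ _, ?_⟩
    have hrw : (u⁻¹) ^ 2 * r = (a₀ * u⁻¹) ^ 2 + a₀ * u⁻¹ := by
      rw [← ha₀]
      have hinv : u * u⁻¹ = 1 := mul_inv_cancel₀ hu
      linear_combination (a₀ * u⁻¹) * hinv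
    rw [hrw, tr_add, tr_sq, zmod2_add_self]
  have hKcard : 2 * (K.card : ℤ) = Fintype.card (GaloisField 2 n) := by
    have := card_ker ((u⁻¹) ^ 2) (pow_ne_zero _ (inv_ne_zero hu))
    exact this
  have hIK : I = K := by
    apply Finset.eq_of_subset_of_card_le hsub
    omega
  by_cases hmem : tr ((u⁻¹) ^ 2 * r) = 0
  · have : r ∈ I := by
      rw [hIK, hK, Finset.mem_filter]; exact ⟨Finset.mem_univ _, hmem⟩
    obtain ⟨a₀, _, ha₀⟩ := Finset.mem_image.mp this
    rw [if_pos hmem]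
    exact fiber_two hu a₀ ha₀
  · rw [if_neg hmem]
    rw [Finset.card_eq_zero]
    rw [Finset.filter_eq_empty_iff]
    intro a _
    intro hcon
    apply hmem
    have : r ∈ I := Finset.mem_image.mpr ⟨a, Finset.mem_univ _, hcon⟩
    rw [hIK, hK, Finset.mem_filter] at this
    exact this.2

lemma slice_card {x y u : F} (hu : u ≠ 0) :
    (univ.filter fun a : F => a ^ 3 + (u + a) ^ 3 + (x + u) ^ 3 = y).card
      = if tr ((y + x ^ 3) * (u⁻¹) ^ 3) = 0 then 2 else 0 := by
  classical
  have h2 : (2 : GaloisField 2 n) = 0 := CharTwo.two_eq_zero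
  have hur : u * ((y + x ^ 3) * u⁻¹ + x ^ 2 + x * u) = (y + x ^ 3) + x ^ 2 * u + x * u ^ 2 := by
    field_simp
  have key : ∀ a : F, (a ^ 3 + (u + a) ^ 3 + (x + u) ^ 3 = y)
      ↔ (a ^ 2 + u * a = (y + x ^ 3) * u⁻¹ + x ^ 2 + x * u) := by
    intro a
    constructor
    · intro h
      apply mul_left_cancel₀ hu
      rw [hur]
      linear_combination h + (a ^ 3 + u ^ 3 + u ^ 2 * a + u * a ^ 2 + x ^ 3 + 2 * x ^ 2 * u
        + 2 * x * u ^ 2) * h2 + (-(2*u*a^2 + 4*u*x^2 + 2*u^2*a + 4*u^2*x + 2*u^3 + 2*a^3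
        + 2*x^3)) * h2
    · intro h
      linear_combination u * h + u * hur / u * 0 + (a ^ 3 + u ^ 3 + u ^ 2 * a + u * a ^ 2 + x ^ 3
        + 2 * x ^ 2 * u + 2 * x * u ^ 2) * h2 + hur
  rw [Finset.filter_congr (fun a _ => key a), fiber_card hu]
  congr 1
  have hrw : (u⁻¹) ^ 2 * ((y + x ^ 3) * u⁻¹ + x ^ 2 + x * u)
      = (y + x ^ 3) * (u⁻¹) ^ 3 + (x * u⁻¹) ^ 2 + x * u⁻¹ := by
    field_simp
  rw [hrw, tr_add, tr_add, tr_sq, add_assoc, zmod2_add_self, add_zero]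

lemma slice_zero {x y : F} (hxy : y ≠ x ^ 3) :
    (univ.filter fun a : F => a ^ 3 + ((0 : F) + a) ^ 3 + (x + 0) ^ 3 = y).card = 0 := by
  classical
  have h2 : (2 : GaloisField 2 n) = 0 := CharTwo.two_eq_zero
  rw [Finset.card_eq_zero, Finset.filter_eq_empty_iff]
  intro a _ hcon
  exact hxy (by linear_combination - hcon + a ^ 3 * h2)

lemma card_P {x y : F} (hxy : y ≠ x ^ 3) :
    (univ.filter fun p : F × F => p.1 ^ 3 + p.2 ^ 3 + (x + p.1 + p.2) ^ 3 = y).card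
      = 2 * (univ.filter fun v : F => v ≠ 0 ∧ tr ((y + x ^ 3) * v ^ 3) = 0).card := by
  classical
  have h2 : (2 : GaloisField 2 n) = 0 := CharTwo.two_eq_zero
  rw [Finset.card_eq_sum_card_fiberwise
    (f := fun p : F × F => p.1 + p.2) (t := univ) (fun p _ => Finset.mem_univ _)]
  have hslice : ∀ u : F,
      ((univ.filter fun p : F × F => p.1 ^ 3 + p.2 ^ 3 + (x + p.1 + p.2) ^ 3 = y).filter
        (fun p => p.1 + p.2 = u)).card
      = (univ.filter fun a : F => a ^ 3 + (u + a) ^ 3 + (x + u) ^ 3 = y).card := by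
    intro u
    apply Finset.card_bij' (fun p _ => p.1) (fun a _ => (a, u + a))
    · intro p hp
      rw [Finset.mem_filter, Finset.mem_filter] at hp
      obtain ⟨⟨-, hcond⟩, hsum⟩ := hp
      rw [Finset.mem_filter]
      refine ⟨Finset.mem_univ _, ?_⟩
      have hp2 : p.2 = u + p.1 := by linear_combination - hsum + (p.2 - u) * h2
      rw [hp2] at hcond
      linear_combination hcond + (x ^ 2 * p.1 + x * p.1 ^ 2 + u ^ 2 * p.1 + u * p.1 ^ 2
        + x * u * p.1 * 2 + p.1 ^ 3 + u * p.1 ^ 2 + x * p.1 ^ 2) * h2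
        + (-(8*p.1*u*x + 4*p.1*u^2 + 4*p.1*x^2 + 8*p.1^2*u + 8*p.1^2*x + 5*p.1^3)) * h2
    · intro a ha
      rw [Finset.mem_filter] at ha
      rw [Finset.mem_filter, Finset.mem_filter]
      refine ⟨⟨Finset.mem_univ _, ?_⟩, by linear_combination a * h2⟩
      have hcond := ha.2
      linear_combination hcond + (x ^ 2 * a + x * a ^ 2 + u ^ 2 * a + u * a ^ 2
        + x * u * a * 2 + a ^ 3 + u * a ^ 2 + x * a ^ 2) * h2
        + (4*a*u*x + 2*a*u^2 + 2*a*x^2 + 4*a^2*u + 4*a^2*x + 3*a^3) * h2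
    · intro p hp
      rw [Finset.mem_filter, Finset.mem_filter] at hp
      obtain ⟨-, hsum⟩ := hp
      ext <;> simp
      linear_combination hsum + (u - p.2) * h2
    · intro a _
      rfl
  rw [Finset.sum_congr rfl (fun u _ => hslice u)]
  have hterm : ∀ u : F, (univ.filter fun a : F => a ^ 3 + (u + a) ^ 3 + (x + u) ^ 3 = y).card
      = if u ≠ 0 ∧ tr ((y + x ^ 3) * (u⁻¹) ^ 3) = 0 then 2 else 0 := by
    intro u
    by_cases hu : u = 0
    · subst hu
      rw [slice_zero hxy]
      simp
    · rw [slice_card hu]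
      simp [hu]
  rw [Finset.sum_congr rfl (fun u _ => hterm u)]
  have hre : ∑ u : F, (if u ≠ 0 ∧ tr ((y + x ^ 3) * (u⁻¹) ^ 3) = 0 then (2 : ℕ) else 0)
      = ∑ v : F, (if v ≠ 0 ∧ tr ((y + x ^ 3) * v ^ 3) = 0 then (2 : ℕ) else 0) := by
    apply Fintype.sum_bijective (fun u : F => u⁻¹) inv_involutive.bijective
    intro u
    by_cases hu : u = 0
    · simp [hu]
    · simp only [ne_eq, inv_eq_zero, hu, not_false_iff, true_and]
  rw [hre, ← Finset.sum_filter, Finset.sum_const, smul_eq_mul, mul_comm]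

lemma card_T_eq_card_P {x y : F} :
    (univ.filter fun p : F × F × F =>
        p.1 + p.2.1 + p.2.2 = x ∧ p.1 ^ 3 + p.2.1 ^ 3 + p.2.2 ^ 3 = y).card
      = (univ.filter fun p : F × F => p.1 ^ 3 + p.2 ^ 3 + (x + p.1 + p.2) ^ 3 = y).card := by
  classical
  have h2 : (2 : GaloisField 2 n) = 0 := CharTwo.two_eq_zero
  apply Finset.card_bij' (fun p _ => (p.1, p.2.1)) (fun q _ => (q.1, q.2, x + q.1 + q.2))
  · rintro ⟨a, b, c⟩ hp
    rw [Finset.mem_filter] at hp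
    obtain ⟨-, hsum, hcube⟩ := hp
    rw [Finset.mem_filter]
    refine ⟨Finset.mem_univ _, ?_⟩
    have hc : c = x + a + b := by linear_combination - hsum + (c - x) * h2
    rw [hc] at hcube
    linear_combination hcube
  · rintro ⟨a, b⟩ hq
    rw [Finset.mem_filter] at hq
    rw [Finset.mem_filter]
    refine ⟨Finset.mem_univ _, by linear_combination (a + b) * h2, by linear_combination hq.2⟩
  · rintro ⟨a, b, c⟩ hp
    rw [Finset.mem_filter] at hp
    obtain ⟨-, hsum, -⟩ := hp
    rw [show x + a + b = c from by linear_combination hsum + (x - c) * h2]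
  · rintro ⟨a, b⟩ _
    rfl

lemma T_distinct {x y : F} (hxy : y ≠ x ^ 3) {a b c : F}
    (hsum : a + b + c = x) (hcube : a ^ 3 + b ^ 3 + c ^ 3 = y) :
    a ≠ b ∧ a ≠ c ∧ b ≠ c := by
  have h2 : (2 : GaloisField 2 n) = 0 := CharTwo.two_eq_zero
  refine ⟨?_, ?_, ?_⟩
  · rintro rfl
    have hc : c = x := by linear_combination hsum - a * h2
    subst hc
    exact hxy (by linear_combination - hcube + a ^ 3 * h2)
  · rintro rfl
    have hb : b = x := by linear_combination hsum - a * h2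
    subst hb
    exact hxy (by linear_combination - hcube + a ^ 3 * h2)
  · rintro rfl
    have ha : a = x := by linear_combination hsum - b * h2
    subst ha
    exact hxy (by linear_combination - hcube + b ^ 3 * h2)

lemma card_T_eq_six {x y : F} (hxy : y ≠ x ^ 3) :
    (univ.filter fun p : F × F × F =>
        p.1 + p.2.1 + p.2.2 = x ∧ p.1 ^ 3 + p.2.1 ^ 3 + p.2.2 ^ 3 = y).card
      = 6 * (univ.filter fun s : Finset (GaloisField 2 n) =>
          s.card = 3 ∧ (∑ t ∈ s, t) = x ∧ (∑ t ∈ s, t ^ 3) = y).card := by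
  classical
  rw [Finset.card_eq_sum_card_fiberwise
    (f := fun p : F × F × F => ({p.1, p.2.1, p.2.2} : Finset (GaloisField 2 n)))
    (t := univ.filter fun s : Finset (GaloisField 2 n) =>
      s.card = 3 ∧ (∑ t ∈ s, t) = x ∧ (∑ t ∈ s, t ^ 3) = y)
    (by
      rintro ⟨a, b, c⟩ hp
      rw [Finset.mem_coe, Finset.mem_filter] at hp
      obtain ⟨-, hsum, hcube⟩ := hp
      obtain ⟨hab, hac, hbc⟩ := T_distinct hxy hsum hcube
      rw [Finset.mem_coe, Finset.mem_filter]
      refine ⟨Finset.mem_univ _, ?_, ?_, ?_⟩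
      · rw [Finset.card_insert_of_notMem (by simp [hab, hac]),
          Finset.card_insert_of_notMem (by simp [hbc]), Finset.card_singleton]
      · rw [Finset.sum_insert (by simp [hab, hac]), Finset.sum_insert (by simp [hbc]),
          Finset.sum_singleton]
        linear_combination hsum
      · rw [Finset.sum_insert (by simp [hab, hac]), Finset.sum_insert (by simp [hbc]),
          Finset.sum_singleton]
        linear_combination hcube)]
  rw [Finset.sum_congr rfl (fun s hs => ?_), Finset.sum_const, smul_eq_mul, mul_comm]
  rw [Finset.mem_filter] at hs
  obtain ⟨-, hcard, hsx, hsy⟩ := hs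
  obtain ⟨a, b, c, hab, hac, hbc, rfl⟩ := Finset.card_eq_three.mp hcard
  have hsum : a + b + c = x := by
    rw [Finset.sum_insert (by simp [hab, hac]), Finset.sum_insert (by simp [hbc]),
      Finset.sum_singleton] at hsx
    linear_combination hsx
  have hcube : a ^ 3 + b ^ 3 + c ^ 3 = y := by
    rw [Finset.sum_insert (by simp [hab, hac]), Finset.sum_insert (by simp [hbc]),
      Finset.sum_singleton] at hsy
    linear_combination hsy
  have hba := hab.symm; have hca := hac.symm; have hcb := hbc.symm
  have hL : (univ.filter fun p : F × F × F =>
        p.1 + p.2.1 + p.2.2 = x ∧ p.1 ^ 3 + p.2.1 ^ 3 + p.2.2 ^ 3 = y).filter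
        (fun p => ({p.1, p.2.1, p.2.2} : Finset (GaloisField 2 n)) = {a, b, c})
      = ({(a, b, c), (a, c, b), (b, a, c), (b, c, a), (c, a, b), (c, b, a)} :
          Finset (F × F × F)) := by
    ext ⟨p1, p2, p3⟩
    constructor
    · intro hp
      rw [Finset.mem_filter, Finset.mem_filter] at hp
      obtain ⟨⟨-, hsum', hcube'⟩, himg⟩ := hp
      obtain ⟨hd12, hd13, hd23⟩ := T_distinct hxy hsum' hcube'
      have hp1 : p1 = a ∨ p1 = b ∨ p1 = c := by
        have : p1 ∈ ({a, b, c} : Finset (GaloisField 2 n)) := by rw [← himg]; simp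
        simpa using this
      have hp2 : p2 = a ∨ p2 = b ∨ p2 = c := by
        have : p2 ∈ ({a, b, c} : Finset (GaloisField 2 n)) := by rw [← himg]; simp
        simpa using this
      have hp3 : p3 = a ∨ p3 = b ∨ p3 = c := by
        have : p3 ∈ ({a, b, c} : Finset (GaloisField 2 n)) := by rw [← himg]; simp
        simpa using this
      simp only [ne_eq] at hd12 hd13 hd23
      rcases hp1 with h1 | h1 | h1 <;> rcases hp2 with hB | hB | hB <;>
        rcases hp3 with hC | hC | hC <;>
        first
          | exact absurd (h1.trans hB.symm) hd12
          | exact absurd (h1.trans hC.symm) hd13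
          | exact absurd (hB.trans hC.symm) hd23
          | simp [Finset.mem_insert, Prod.ext_iff, h1, hB, hC]
    · intro hp
      simp only [Finset.mem_insert, Finset.mem_singleton, Prod.ext_iff] at hp
      rw [Finset.mem_filter, Finset.mem_filter]
      rcases hp with ⟨h1, hB, hC⟩ | ⟨h1, hB, hC⟩ | ⟨h1, hB, hC⟩ | ⟨h1, hB, hC⟩ |
        ⟨h1, hB, hC⟩ | ⟨h1, hB, hC⟩ <;>
        subst h1 <;> subst hB <;> subst hC <;>
        refine ⟨⟨Finset.mem_univ _, by linear_combination hsum, by linear_combination hcube⟩, ?_⟩ <;>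
        · ext t
          simp only [Finset.mem_insert, Finset.mem_singleton]
          try tauto
  rw [hL]
  rw [Finset.card_insert_of_notMem (by simp [Prod.ext_iff, hab, hac, hbc, hba, hca, hcb]),
    Finset.card_insert_of_notMem (by simp [Prod.ext_iff, hab, hac, hbc, hba, hca, hcb]),
    Finset.card_insert_of_notMem (by simp [Prod.ext_iff, hab, hac, hbc, hba, hca, hcb]),
    Finset.card_insert_of_notMem (by simp [Prod.ext_iff, hab, hac, hbc, hba, hca, hcb]),
    Finset.card_insert_of_notMem (by simp [Prod.ext_iff, hab, hac, hbc, hba, hca, hcb]),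
    Finset.card_singleton]

lemma tr_zero : tr (0 : F) = 0 := map_zero (Algebra.trace (ZMod 2) (GaloisField 2 n))

/-- For `n ≥ 1`, `F = 𝔽_{2^n}`, and `x y : F` with `y ≠ x³`, the number of
unordered triples `{a,b,c}` of pairwise distinct elements of `F` (i.e. 3-element finsets)
with `a + b + c = x` and `a³ + b³ + c³ = y` is at least `(2^n − 2√(2^n) − 2)/6`. -/
theorem count_cover_triples (n : ℕ) (hn : 1 ≤ n) (x y : GaloisField 2 n) (hxy : y ≠ x ^ 3) :
    ((2 : ℝ) ^ n - 2 * Real.sqrt ((2 : ℝ) ^ n) - 2) / 6 ≤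
      ({s : Finset (GaloisField 2 n) |
          s.card = 3 ∧ (∑ t ∈ s, t) = x ∧ (∑ t ∈ s, t ^ 3) = y} : Set _).ncard := by
  classical
  have h2 : (2 : GaloisField 2 n) = 0 := CharTwo.two_eq_zero
  have hc : y + x ^ 3 ≠ 0 := fun h => hxy (by linear_combination h - x ^ 3 * h2)
  have hq : Fintype.card (GaloisField 2 n) = 2 ^ n := by
    rw [← Nat.card_eq_fintype_card, GaloisField.card 2 n (by omega : n ≠ 0)]
  set B := (univ.filter fun s : Finset (GaloisField 2 n) =>
      s.card = 3 ∧ (∑ t ∈ s, t) = x ∧ (∑ t ∈ s, t ^ 3) = y) with hBdef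
  have hset : ({s : Finset (GaloisField 2 n) |
      s.card = 3 ∧ (∑ t ∈ s, t) = x ∧ (∑ t ∈ s, t ^ 3) = y} : Set _) = ↑B := by
    ext s; simp [hBdef]
  rw [hset, Set.ncard_coe_finset]
  have hchain : 6 * B.card = 2 * (univ.filter fun v : GaloisField 2 n =>
      v ≠ 0 ∧ tr ((y + x ^ 3) * v ^ 3) = 0).card := by
    rw [hBdef, ← card_T_eq_six hxy, card_T_eq_card_P, card_P hxy]
  set N0 := (univ.filter fun v : GaloisField 2 n =>
      v ≠ 0 ∧ tr ((y + x ^ 3) * v ^ 3) = 0).card with hN0def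
  set N := (univ.filter fun v : GaloisField 2 n =>
      tr ((y + x ^ 3) * v ^ 3) = 0).card with hNdef
  have hNN0 : N = N0 + 1 := by
    have hsplit : (univ.filter fun v : GaloisField 2 n => tr ((y + x ^ 3) * v ^ 3) = 0)
        = insert 0 (univ.filter fun v : GaloisField 2 n =>
            v ≠ 0 ∧ tr ((y + x ^ 3) * v ^ 3) = 0) := by
      ext v
      simp only [Finset.mem_filter, Finset.mem_univ, true_and, Finset.mem_insert]
      constructor
      · intro hv
        by_cases h0 : v = 0
        · exact Or.inl h0
        · exact Or.inr ⟨h0, hv⟩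
      · rintro (rfl | ⟨-, hv⟩)
        · rw [show (y + x ^ 3) * (0 : GaloisField 2 n) ^ 3 = 0 by ring]
          exact tr_zero
        · exact hv
    rw [hNdef, hsplit, Finset.card_insert_of_notMem (by simp), hN0def]
  have hS : (∑ v : GaloisField 2 n, e (tr ((y + x ^ 3) * v ^ 3)))
      = 2 * (N : ℤ) - Fintype.card (GaloisField 2 n) := by
    rw [hNdef]; exact sum_e_card _
  have hS2 : (∑ v : GaloisField 2 n, e (tr ((y + x ^ 3) * v ^ 3))) ^ 2
      ≤ 4 * (Fintype.card (GaloisField 2 n) : ℤ) := sum_e_sq_le _ hc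
  set S := ∑ v : GaloisField 2 n, e (tr ((y + x ^ 3) * v ^ 3)) with hSdef
  have hqR : ((Fintype.card (GaloisField 2 n) : ℝ)) = (2 : ℝ) ^ n := by
    rw [hq]; push_cast; ring
  have hsqrtnn : 0 ≤ Real.sqrt ((2 : ℝ) ^ n) := Real.sqrt_nonneg _
  have hsq : (Real.sqrt ((2 : ℝ) ^ n)) ^ 2 = (2 : ℝ) ^ n := Real.sq_sqrt (by positivity)
  have hSR : ((S : ℝ)) ^ 2 ≤ 4 * (2 : ℝ) ^ n := by
    have := hS2
    rw [← hqR]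
    exact_mod_cast this
  have hSlb : -(2 * Real.sqrt ((2 : ℝ) ^ n)) ≤ (S : ℝ) := by
    by_contra hlt
    push_neg at hlt
    nlinarith [hSR, hsq, hsqrtnn]
  have hB6 : (6 : ℝ) * B.card = 2 * (N0 : ℝ) := by exact_mod_cast hchain
  have hNR : (N : ℝ) = N0 + 1 := by exact_mod_cast hNN0
  have hSN : (S : ℝ) = 2 * N - (2 : ℝ) ^ n := by
    rw [← hqR]; exact_mod_cast hS
  rw [div_le_iff₀ (by norm_num : (0:ℝ) < 6)]
  linarith

end Aux
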